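/- Let G=(V,E) be a finite simple graph with edge weights w : E → ℝ_{≥0}, b : V → ℤ with b_i ≥ 1, and 0 < ε ≤ 1. Let β* be the b-matching LP value of (G,w) (using all odd-set constraints, U ∈ 𝒪), and let β*_s be the value of the same LP in which the odd-set constraints ∑_{(i,j)∈E: i,j∈U} y_{ij} ≤ ⌊‖U‖_b/2⌋ are imposed only for U ∈ 𝒪_s = {U ∈ 𝒪 : ‖U‖_b ≤ 4/ε}. Then β* ≤ β*_s ≤ (1+ε)·β*. -/

import Mathlib

open Finset
open scoped Classical

/-- Feasibility for the `b`-matching LP on edge set `E` where the odd-set constraints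
are imposed only for the odd sets in the family `𝒰`. -/
def BMatchFeasibleOn {V : Type*} [Fintype V] [DecidableEq V]
    (E : Finset (Sym2 V)) (b : V → ℤ) (𝒰 : Finset (Finset V))
    (y : Sym2 V → ℝ) : Prop :=
  (∀ e ∈ E, 0 ≤ y e) ∧
  (∀ i : V, ∑ e ∈ E.filter (fun e => i ∈ e), y e ≤ (b i : ℝ)) ∧
  (∀ U ∈ 𝒰, ∑ e ∈ E.filter (fun e => ∀ v ∈ e, v ∈ U), y e
      ≤ (((∑ i ∈ U, b i) / 2 : ℤ) : ℝ))

lemma sum_inside_le {V : Type*} [Fintype V] [DecidableEq V]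
    (E : Finset (Sym2 V)) (hE : ∀ e ∈ E, ¬ e.IsDiag)
    (b : V → ℤ) (y : Sym2 V → ℝ)
    (hy0 : ∀ e ∈ E, 0 ≤ y e)
    (hdeg : ∀ i : V, ∑ e ∈ E.filter (fun e => i ∈ e), y e ≤ (b i : ℝ))
    (U : Finset V) :
    2 * ∑ e ∈ E.filter (fun e => ∀ v ∈ e, v ∈ U), y e ≤ ∑ i ∈ U, (b i : ℝ) := by
  have key : ∑ i ∈ U, ∑ e ∈ E.filter (fun e => i ∈ e), y e
      = ∑ e ∈ E, ((U.filter (fun i => i ∈ e)).card : ℝ) * y e := by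
    simp_rw [sum_filter]
    rw [Finset.sum_comm]
    refine sum_congr rfl fun e _ => ?_
    rw [card_filter]
    push_cast
    rw [Finset.sum_mul]
    simp [ite_mul]
  have h2 : ∀ e ∈ E.filter (fun e => ∀ v ∈ e, v ∈ U),
      ((U.filter (fun i => i ∈ e)).card : ℝ) = 2 := by
    intro e he
    rw [mem_filter] at he
    obtain ⟨heE, hin⟩ := he
    induction e using Sym2.ind with
    | _ a c =>
      have hne : a ≠ c := by
        have := hE _ heE
        simpa [Sym2.mk_isDiag_iff] using this
      have ha : a ∈ U := hin a (by simp)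
      have hc : c ∈ U := hin c (by simp)
      have : U.filter (fun i => i ∈ s(a, c)) = {a, c} := by
        ext i
        simp only [mem_filter, Sym2.mem_iff, mem_insert, mem_singleton]
        constructor
        · rintro ⟨_, h⟩; exact h
        · rintro (rfl | rfl) <;> simp [ha, hc]
      rw [this, card_insert_of_notMem (by simpa using hne), card_singleton]
      norm_num
  calc 2 * ∑ e ∈ E.filter (fun e => ∀ v ∈ e, v ∈ U), y e
      = ∑ e ∈ E.filter (fun e => ∀ v ∈ e, v ∈ U),
          ((U.filter (fun i => i ∈ e)).card : ℝ) * y e := by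
        rw [mul_sum]; exact sum_congr rfl fun e he => by rw [h2 e he]
    _ ≤ ∑ e ∈ E, ((U.filter (fun i => i ∈ e)).card : ℝ) * y e := by
        apply sum_le_sum_of_subset_of_nonneg (filter_subset _ _)
        intro e heE _
        exact mul_nonneg (by positivity) (hy0 e heE)
    _ = ∑ i ∈ U, ∑ e ∈ E.filter (fun e => i ∈ e), y e := key.symm
    _ ≤ ∑ i ∈ U, (b i : ℝ) := sum_le_sum fun i _ => hdeg i

/-- imposing the odd-set constraints only on odd sets of `b`-size at
most `4/ε` changes the `b`-matching LP value by at most a `(1+ε)` factor. -/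
theorem small_oddsets_suffice
    {V : Type*} [Fintype V] [DecidableEq V]
    (G : SimpleGraph V) [DecidableRel G.Adj]
    (w : Sym2 V → ℝ) (hw : ∀ e ∈ G.edgeFinset, 0 ≤ w e)
    (b : V → ℤ) (hb : ∀ i, 1 ≤ b i)
    (ε : ℝ) (hε0 : 0 < ε) (hε1 : ε ≤ 1)
    (βstar : ℝ)
    (hβstar : IsGreatest
      {v | ∃ y, BMatchFeasibleOn G.edgeFinset b
          ((univ : Finset (Finset V)).filter (fun U => Odd (∑ i ∈ U, b i))) y ∧
        v = ∑ e ∈ G.edgeFinset, w e * y e} βstar)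
    (βs : ℝ)
    (hβs : IsGreatest
      {v | ∃ y, BMatchFeasibleOn G.edgeFinset b
          ((univ : Finset (Finset V)).filter
            (fun U => Odd (∑ i ∈ U, b i) ∧ ((∑ i ∈ U, b i : ℤ) : ℝ) ≤ 4 / ε)) y ∧
        v = ∑ e ∈ G.edgeFinset, w e * y e} βs) :
    βstar ≤ βs ∧ βs ≤ (1 + ε) * βstar := by
  have hE : ∀ e ∈ G.edgeFinset, ¬ e.IsDiag := fun e he =>
    G.not_isDiag_of_mem_edgeSet (SimpleGraph.mem_edgeFinset.mp he)
  have h1ε : (0:ℝ) < 1 + ε := by linarith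
  constructor
  · -- βstar ≤ βs
    obtain ⟨y, ⟨hy0, hdeg, hodd⟩, hv⟩ := hβstar.1
    apply hβs.2
    refine ⟨y, ⟨hy0, hdeg, ?_⟩, hv⟩
    intro U hU
    apply hodd
    simp only [mem_filter, mem_univ, true_and] at hU ⊢
    exact hU.1
  · -- βs ≤ (1+ε) βstar
    obtain ⟨y, ⟨hy0, hdeg, hodd⟩, hv⟩ := hβs.1
    have key := sum_inside_le G.edgeFinset hE b y hy0 hdeg
    set y' : Sym2 V → ℝ := fun e => y e / (1 + ε) with hy'
    have hfeas : BMatchFeasibleOn G.edgeFinset b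
        ((univ : Finset (Finset V)).filter (fun U => Odd (∑ i ∈ U, b i))) y' := by
      refine ⟨fun e he => div_nonneg (hy0 e he) h1ε.le, ?_, ?_⟩
      · intro i
        have := hdeg i
        rw [hy']
        simp only
        rw [← sum_div]
        calc (∑ e ∈ G.edgeFinset.filter (fun e => i ∈ e), y e) / (1 + ε)
            ≤ (∑ e ∈ G.edgeFinset.filter (fun e => i ∈ e), y e) := by
              apply div_le_self _ (by linarith)
              exact sum_nonneg fun e he => hy0 e (mem_filter.mp he).1
          _ ≤ (b i : ℝ) := this
      · intro U hU
        simp only [mem_filter, mem_univ, true_and] at hU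
        set B : ℤ := ∑ i ∈ U, b i with hB
        have hSnonneg : 0 ≤ ∑ e ∈ G.edgeFinset.filter (fun e => ∀ v ∈ e, v ∈ U), y e :=
          sum_nonneg fun e he => hy0 e (mem_filter.mp he).1
        rw [hy']
        simp only
        rw [← sum_div]
        by_cases hsmall : ((B : ℤ) : ℝ) ≤ 4 / ε
        · have := hodd U (by simp only [mem_filter, mem_univ, true_and]; exact ⟨hU, hsmall⟩)
          calc (∑ e ∈ G.edgeFinset.filter (fun e => ∀ v ∈ e, v ∈ U), y e) / (1 + ε)
              ≤ ∑ e ∈ G.edgeFinset.filter (fun e => ∀ v ∈ e, v ∈ U), y e :=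
                div_le_self hSnonneg (by linarith)
            _ ≤ _ := this
        · push_neg at hsmall
          -- B odd, B > 4/ε ; floor = (B-1)/2
          obtain ⟨k, hk⟩ := hU
          have hfloor : (B / 2 : ℤ) = k := by omega
          have hBk : (B : ℝ) = 2 * k + 1 := by rw [hk]; push_cast; ring
          have hcast : ∑ i ∈ U, ((b i : ℤ) : ℝ) = (B : ℝ) := by rw [hB]; push_cast; ring
          have key' : 2 * ∑ e ∈ G.edgeFinset.filter (fun e => ∀ v ∈ e, v ∈ U), y e
              ≤ (B : ℝ) := by rw [← hcast]; exact key U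
          rw [hfloor]
          rw [div_le_iff₀ h1ε]
          -- need S ≤ k * (1+ε); S ≤ B/2 = k + 1/2; k+1/2 ≤ k(1+ε) ⟺ 1/2 ≤ kε
          have hk4 : (4:ℝ) / ε < 2 * k + 1 := by rw [← hBk]; exact hsmall
          have hεpos := hε0
          have h4 : 4 < ε * (2 * k + 1) := by
            rw [div_lt_iff₀ hεpos] at hk4; linarith [mul_comm ε ((2:ℝ) * k + 1)]
          nlinarith [hSnonneg]
    have hmem : (∑ e ∈ G.edgeFinset, w e * y' e) ≤ βstar :=
      hβstar.2 ⟨y', hfeas, rfl⟩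
    have hsum : ∑ e ∈ G.edgeFinset, w e * y' e = βs / (1 + ε) := by
      rw [hv, sum_div]
      exact sum_congr rfl fun e _ => by rw [hy']; ring
    rw [hsum, div_le_iff₀ h1ε] at hmem
    linarith [hmem]
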